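/- arXiv:2401.02373 — 2 statements merged into one kernel-verified Lean document; each statement's English description precedes it below -/
import Mathlib

section
/- If G is a connected graph of order at least 3 with girth at least 5, then every outer mutual-visibility set of G is an independent set. -/
namespace MutualVisibility

open SimpleGraph

variable {V W : Type*}

/-- `x` and `y` are `X`-visible in `G`: there is a shortest `x,y`-path all of whose
internal vertices avoid `X`. -/
def Visible (G : SimpleGraph V) (X : Set V) (x y : V) : Prop :=
  ∃ p : G.Walk x y, p.length = G.dist x y ∧ ∀ v ∈ p.support, v ≠ x → v ≠ y → v ∉ X

/-- `X` is a mutual-visibility set: any two vertices of `X` are `X`-visible. -/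
def IsMutualVisSet (G : SimpleGraph V) (X : Set V) : Prop :=
  ∀ x ∈ X, ∀ y ∈ X, Visible G X x y

/-- outer mutual-visibility set -/
def IsOuterMutualVisSet (G : SimpleGraph V) (X : Set V) : Prop :=
  IsMutualVisSet G X ∧ ∀ x ∈ X, ∀ y ∉ X, Visible G X x y

/-- dual mutual-visibility set -/
def IsDualMutualVisSet (G : SimpleGraph V) (X : Set V) : Prop :=
  IsMutualVisSet G X ∧ ∀ x ∉ X, ∀ y ∉ X, Visible G X x y

/-- total mutual-visibility set -/
def IsTotalMutualVisSet (G : SimpleGraph V) (X : Set V) : Prop :=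
  ∀ x y : V, Visible G X x y

/-- mutual-visibility number μ(G) -/
noncomputable def mu (G : SimpleGraph V) : ℕ :=
  sSup {k | ∃ X : Set V, IsMutualVisSet G X ∧ X.ncard = k}

/-- outer mutual-visibility number μ_o(G) -/
noncomputable def muOuter (G : SimpleGraph V) : ℕ :=
  sSup {k | ∃ X : Set V, IsOuterMutualVisSet G X ∧ X.ncard = k}

/-- dual mutual-visibility number μ_d(G) -/
noncomputable def muDual (G : SimpleGraph V) : ℕ :=
  sSup {k | ∃ X : Set V, IsDualMutualVisSet G X ∧ X.ncard = k}

/-- total mutual-visibility number μ_t(G) -/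
noncomputable def muTotal (G : SimpleGraph V) : ℕ :=
  sSup {k | ∃ X : Set V, IsTotalMutualVisSet G X ∧ X.ncard = k}

/-- `H` contains a subgraph copy of `F`. -/
def ContainsCopy (F : SimpleGraph W) (H : SimpleGraph V) : Prop :=
  ∃ f : W → V, Function.Injective f ∧ ∀ a b, F.Adj a b → H.Adj (f a) (f b)

/-- The Turán number ex(n; F): max number of edges of an `n`-vertex graph with no copy of `F`. -/
noncomputable def exNum (n : ℕ) (F : SimpleGraph W) : ℕ :=
  sSup {k | ∃ H : SimpleGraph (Fin n), ¬ ContainsCopy F H ∧ H.edgeSet.ncard = k}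

/-- The direct (tensor/categorical) product of graphs. -/
def directProd (G : SimpleGraph V) (H : SimpleGraph W) : SimpleGraph (V × W) where
  Adj x y := G.Adj x.1 y.1 ∧ H.Adj x.2 y.2
  symm := ⟨fun _ _ h => ⟨h.1.symm, h.2.symm⟩⟩
  loopless := ⟨fun _ h => G.irrefl h.1⟩

/-- The join `G + H` of two graphs. -/
def graphJoin (G : SimpleGraph V) (H : SimpleGraph W) : SimpleGraph (V ⊕ W) where
  Adj u v := match u, v with
    | Sum.inl a, Sum.inl b => G.Adj a b
    | Sum.inr a, Sum.inr b => H.Adj a b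
    | _, _ => True
  symm := ⟨fun u v => match u, v with
    | Sum.inl _, Sum.inl _ => fun h => G.adj_symm h
    | Sum.inr _, Sum.inr _ => fun h => H.adj_symm h
    | Sum.inl _, Sum.inr _ => fun _ => trivial
    | Sum.inr _, Sum.inl _ => fun _ => trivial⟩
  loopless := ⟨fun u => match u with
    | Sum.inl _ => fun h => G.irrefl h
    | Sum.inr _ => fun h => H.irrefl h⟩

/-- A big-μ graph: `G = (K_1 ∪ K_t) + H` for some `t ≥ 0` and some graph `H`. -/
def IsBigMu {V : Type} (G : SimpleGraph V) : Prop :=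
  ∃ (t : ℕ) (W : Type) (H : SimpleGraph W),
    Nonempty (G ≃g graphJoin ((⊤ : SimpleGraph (Fin 1)) ⊕g (⊤ : SimpleGraph (Fin t))) H)

/-- A cograph: a graph with no induced path on four vertices. -/
def IsCograph (G : SimpleGraph V) : Prop :=
  ¬ ∃ f : Fin 4 → V, Function.Injective f ∧
      ∀ a b, (pathGraph 4).Adj a b ↔ G.Adj (f a) (f b)

/-- The Petersen graph, realized as the Kneser graph K(5,2). -/
def petersen : SimpleGraph {s : Finset (Fin 5) // s.card = 2} where
  Adj a b := Disjoint a.1 b.1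
  symm := ⟨fun _ _ h => h.symm⟩
  loopless := by
    refine ⟨?_⟩
    rintro ⟨s, hs⟩ h
    rw [disjoint_self, Finset.bot_eq_empty] at h
    subst h
    simp at hs


private lemma no_tri_aux {V : Type*} (G : SimpleGraph V) (hg : 5 ≤ G.egirth) {a b c : V}
    (hab : G.Adj a b) (hbc : G.Adj b c) (hca : G.Adj c a) : False := by
  have hcyc : (Walk.cons hab (Walk.cons hbc (Walk.cons hca Walk.nil))).IsCycle := by
    simp [Walk.isCycle_def, Walk.isTrail_def, Sym2.eq_iff, hab.ne, hbc.ne, hca.ne,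
      hab.ne', hbc.ne', hca.ne']
  have := le_egirth.mp hg a _ hcyc
  norm_num [Walk.length_cons] at this

private lemma no_c4_aux {V : Type*} (G : SimpleGraph V) (hg : 5 ≤ G.egirth) {a b c d : V}
    (hab : G.Adj a b) (hbc : G.Adj b c) (hcd : G.Adj c d) (hda : G.Adj d a)
    (hac : a ≠ c) (hbd : b ≠ d) : False := by
  have hcyc : (Walk.cons hab (Walk.cons hbc (Walk.cons hcd (Walk.cons hda Walk.nil)))).IsCycle := by
    simp [Walk.isCycle_def, Walk.isTrail_def, Sym2.eq_iff, hab.ne, hbc.ne, hcd.ne, hda.ne,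
      hab.ne', hbc.ne', hcd.ne', hda.ne', hac, hbd, hac.symm, hbd.symm]
  have := le_egirth.mp hg a _ hcyc
  norm_num [Walk.length_cons] at this

private lemma exists_nbr_aux {V : Type*} (G : SimpleGraph V) {x y : V} :
    ∀ {a w : V} (_ : G.Walk a w), (a = x ∨ a = y) → w ≠ x → w ≠ y →
      ∃ z, z ≠ x ∧ z ≠ y ∧ (G.Adj x z ∨ G.Adj y z) := by
  intro a w p
  induction p with
  | nil => rintro (rfl|rfl) h1 h2 <;> simp_all
  | @cons a u w h q ih =>
    rintro ha hw1 hw2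
    by_cases hu : u = x ∨ u = y
    · exact ih hu hw1 hw2
    · push_neg at hu
      refine ⟨u, hu.1, hu.2, ?_⟩
      rcases ha with rfl|rfl
      · exact Or.inl h
      · exact Or.inr h

theorem outer_mv_set_indep_of_girth_ge_five {V : Type*} [Fintype V]
    (G : SimpleGraph V) (hconn : G.Connected) (hcard : 3 ≤ Fintype.card V)
    (hgirth : 5 ≤ G.egirth) (X : Set V) (hX : IsOuterMutualVisSet G X) :
    ∀ x ∈ X, ∀ y ∈ X, ¬ G.Adj x y := by
  classical
  intro x hx y hy hadj
  obtain ⟨w, hw⟩ : ∃ w, w ≠ x ∧ w ≠ y := by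
    by_contra hcon
    push_neg at hcon
    have : Fintype.card V ≤ 2 := by
      have : (Finset.univ : Finset V) ⊆ {x, y} := fun v _ => by
        rcases eq_or_ne v x with rfl|h
        · simp
        · simp [hcon v h]
      calc Fintype.card V = Finset.univ.card := rfl
        _ ≤ ({x,y} : Finset V).card := Finset.card_le_card this
        _ ≤ 2 := Finset.card_insert_le _ _ |>.trans (by simp)
    omega
  obtain ⟨z, hzx, hzy, hz⟩ := exists_nbr_aux G ((hconn x w).some) (Or.inl rfl) hw.1 hw.2
  have core : ∀ a b c : V, a ∈ X → b ∈ X → G.Adj a b → G.Adj b c → c ≠ a → False := by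
    intro a b c haX hbX hab hbc hca
    have hnac : ¬ G.Adj a c := fun h => no_tri_aux G hgirth hab hbc h.symm
    have hdist : G.dist a c = 2 := by
      have hle : G.dist a c ≤ 2 := by
        have := SimpleGraph.dist_le (Walk.cons hab (Walk.cons hbc Walk.nil))
        simpa using this
      have h0 : G.dist a c ≠ 0 := by
        intro h
        exact hca ((hconn a c).dist_eq_zero_iff.mp h).symm
      have h1 : G.dist a c ≠ 1 := fun h => hnac (SimpleGraph.dist_eq_one_iff_adj.mp h)
      omega
    have hvis : ∃ p : G.Walk a c, p.length = G.dist a c ∧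
        ∀ v ∈ p.support, v ≠ a → v ≠ c → v ∉ X := by
      by_cases hcX : c ∈ X
      · exact hX.1 a haX c hcX
      · exact hX.2 a haX c hcX
    obtain ⟨p, hplen, hpX⟩ := hvis
    rw [hdist] at hplen
    obtain ⟨m, h1, h2, hmX⟩ : ∃ m, G.Adj a m ∧ G.Adj m c ∧ m ∉ X := by
      cases p with
      | nil => simp at hplen
      | cons h q =>
        cases q with
        | nil => simp at hplen
        | cons h' q' =>
          cases q' with
          | nil =>
            refine ⟨_, h, h', hpX _ (by simp) h.ne' h'.ne⟩
          | cons h'' q'' => simp [Walk.length_cons] at hplen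
    have hmb : m ≠ b := fun h => hmX (h ▸ hbX)
    exact no_c4_aux G hgirth hab hbc h2.symm h1.symm hca.symm hmb.symm
  rcases hz with h|h
  · exact core y x z hy hx hadj.symm h hzy
  · exact core x y z hx hy hadj h hzx
end MutualVisibility
end

section
/- For n ≥ 3, the total mutual-visibility number of L(K_n) equals the Turán number ex(n; C_4), the maximum number of edges of an n-vertex graph containing no 4-cycle. -/
namespace MutualVisibility

open SimpleGraph

variable {V W : Type*}

section AuxC4

def NoC4 {n : ℕ} (S : Set (Sym2 (Fin n))) : Prop :=
  ∀ a b c d : Fin n, a ≠ b → c ≠ d → a ≠ c → a ≠ d → b ≠ c → b ≠ d →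
    ¬(s(a,c) ∈ S ∧ s(a,d) ∈ S ∧ s(b,c) ∈ S ∧ s(b,d) ∈ S)

lemma lineAdj {n : ℕ} {x y : (⊤ : SimpleGraph (Fin n)).edgeSet} {u v w : Fin n}
    (hx : (x : Sym2 (Fin n)) = s(u,v)) (hy : (y : Sym2 (Fin n)) = s(u,w)) (hvw : v ≠ w) :
    (⊤ : SimpleGraph (Fin n)).lineGraph.Adj x y := by
  rw [lineGraph_adj_iff_exists]
  refine ⟨?_, u, by simp [hx, hy]⟩
  intro h
  rw [h, hy] at hx
  exact hvw (Sym2.congr_right.mp hx.symm)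

lemma dist_eq_two {V : Type*} {G : SimpleGraph V} {x y g : V} (hxy : x ≠ y)
    (hna : ¬ G.Adj x y) (h1 : G.Adj x g) (h2 : G.Adj g y) : G.dist x y = 2 := by
  have hle : G.dist x y ≤ 2 := by
    have := SimpleGraph.dist_le (SimpleGraph.Walk.cons h1 (SimpleGraph.Walk.cons h2 SimpleGraph.Walk.nil))
    simpa using this
  have h0 : G.dist x y ≠ 0 := by
    intro h
    rcases SimpleGraph.dist_eq_zero_iff_eq_or_not_reachable.mp h with h | h
    · exact hxy h
    · exact h ⟨SimpleGraph.Walk.cons h1 (SimpleGraph.Walk.cons h2 SimpleGraph.Walk.nil)⟩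
  have h1' : G.dist x y ≠ 1 := fun h => hna (SimpleGraph.dist_eq_one_iff_adj.mp h)
  omega

lemma vis_aux {V : Type*} {G : SimpleGraph V} {X : Set V} {x y g : V} (hxy : x ≠ y)
    (hna : ¬ G.Adj x y) (h1 : G.Adj x g) (h2 : G.Adj g y) (hg : g ∉ X) :
    Visible G X x y := by
  refine ⟨SimpleGraph.Walk.cons h1 (SimpleGraph.Walk.cons h2 SimpleGraph.Walk.nil), ?_, ?_⟩
  · simp [dist_eq_two hxy hna h1 h2]
  · intro v hv hvx hvy
    simp [SimpleGraph.Walk.support_cons] at hv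
    rcases hv with h | h | h
    · exact absurd h hvx
    · exact h ▸ hg
    · exact absurd h hvy

lemma exists_mid {V : Type*} {G : SimpleGraph V} {X : Set V} {x y : V}
    (h : Visible G X x y) (hd : G.dist x y = 2) :
    ∃ g, G.Adj x g ∧ G.Adj g y ∧ g ∉ X := by
  obtain ⟨p, hlen, hsup⟩ := h
  rw [hd] at hlen
  cases p with
  | nil => simp at hlen
  | cons h1 q =>
    cases q with
    | nil => simp at hlen
    | cons h2 r =>
      cases r with
      | nil =>
        rename_i g
        exact ⟨g, h1, h2, hsup g (by simp) h1.ne' h2.ne⟩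
      | cons h3 r => simp at hlen

lemma edge_rep {n : ℕ} (x : (⊤ : SimpleGraph (Fin n)).edgeSet) :
    ∃ a b : Fin n, a ≠ b ∧ (x : Sym2 (Fin n)) = s(a,b) := by
  obtain ⟨e, he⟩ := x
  induction e using Sym2.ind with
  | _ a b => exact ⟨a, b, by simpa using he, rfl⟩

lemma tmv_iff {n : ℕ} (X : Set ((⊤ : SimpleGraph (Fin n)).edgeSet)) :
    IsTotalMutualVisSet (⊤ : SimpleGraph (Fin n)).lineGraph X ↔ NoC4 (Subtype.val '' X) := by
  constructor
  · intro htmv a b c d hab hcd hac had hbc hbd ⟨m1, m2, m3, m4⟩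
    set x : (⊤ : SimpleGraph (Fin n)).edgeSet := ⟨s(a,b), by simp [hab]⟩ with hxdef
    set y : (⊤ : SimpleGraph (Fin n)).edgeSet := ⟨s(c,d), by simp [hcd]⟩ with hydef
    have hx : (x : Sym2 (Fin n)) = s(a,b) := rfl
    have hy : (y : Sym2 (Fin n)) = s(c,d) := rfl
    have hxy : x ≠ y := by
      intro h
      have : s(a,b) = s(c,d) := congrArg Subtype.val h
      rw [Sym2.eq_iff] at this
      tauto
    have hna : ¬ (⊤ : SimpleGraph (Fin n)).lineGraph.Adj x y := by
      rw [lineGraph_adj_iff_exists]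
      rintro ⟨-, v, hv1, hv2⟩
      rw [hx, Sym2.mem_iff] at hv1
      rw [hy, Sym2.mem_iff] at hv2
      rcases hv1 with rfl | rfl <;> rcases hv2 with h | h <;> tauto
    have hne : ∀ (u w : Fin n), u ≠ w → s(u,w) ∈ (⊤ : SimpleGraph (Fin n)).edgeSet := by
      intro u w h; simp [h]
    have h1 : (⊤ : SimpleGraph (Fin n)).lineGraph.Adj x ⟨s(a,c), hne a c hac⟩ :=
      lineAdj hx rfl hbc
    have h2 : (⊤ : SimpleGraph (Fin n)).lineGraph.Adj ⟨s(a,c), hne a c hac⟩ y :=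
      lineAdj (Sym2.eq_swap : ((⟨s(a,c), hne a c hac⟩ : (⊤ : SimpleGraph (Fin n)).edgeSet) : Sym2 (Fin n)) = s(c,a)) hy had
    have hd : (⊤ : SimpleGraph (Fin n)).lineGraph.dist x y = 2 :=
      dist_eq_two hxy hna h1 h2
    obtain ⟨g, hg1, hg2, hgX⟩ := exists_mid (htmv x y) hd
    obtain ⟨-, u, hu1, hu2⟩ := lineGraph_adj_iff_exists.mp hg1
    obtain ⟨-, w, hw1, hw2⟩ := lineGraph_adj_iff_exists.mp hg2
    rw [hx, Sym2.mem_iff] at hu1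
    rw [hy, Sym2.mem_iff] at hw2
    have hval : ∀ m ∈ Subtype.val '' X, (g : Sym2 (Fin n)) = m → g ∈ X := by
      rintro m ⟨g', hg', hvv⟩ hgm
      have : g' = g := Subtype.ext (hvv.trans hgm.symm)
      exact this ▸ hg'
    apply hgX
    rcases hu1 with rfl | rfl <;> rcases hw2 with rfl | rfl
    · exact hval _ m1 ((Sym2.mem_and_mem_iff hac).mp ⟨hu2, hw1⟩)
    · exact hval _ m2 ((Sym2.mem_and_mem_iff had).mp ⟨hu2, hw1⟩)
    · exact hval _ m3 ((Sym2.mem_and_mem_iff hbc).mp ⟨hu2, hw1⟩)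
    · exact hval _ m4 ((Sym2.mem_and_mem_iff hbd).mp ⟨hu2, hw1⟩)
  · intro hno x y
    by_cases hxy : x = y
    · subst hxy
      exact ⟨SimpleGraph.Walk.nil, by simp [SimpleGraph.dist_self], by intro v hv hvx _; simp at hv; exact absurd hv hvx⟩
    by_cases hadj : (⊤ : SimpleGraph (Fin n)).lineGraph.Adj x y
    · refine ⟨SimpleGraph.Walk.cons hadj SimpleGraph.Walk.nil, by simp [SimpleGraph.dist_eq_one_iff_adj.mpr hadj], ?_⟩
      intro v hv hvx hvy
      simp [SimpleGraph.Walk.support_cons] at hv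
      rcases hv with h | h
      · exact absurd h hvx
      · exact absurd h hvy
    obtain ⟨a, b, hab, hx⟩ := edge_rep x
    obtain ⟨c, d, hcd, hy⟩ := edge_rep y
    have hdisj : ∀ v : Fin n, v ∈ (x : Sym2 (Fin n)) → v ∈ (y : Sym2 (Fin n)) → False := by
      intro v hv1 hv2
      exact hadj (lineGraph_adj_iff_exists.mpr ⟨hxy, v, hv1, hv2⟩)
    have hac : a ≠ c := fun h => hdisj a (by simp [hx]) (by simp [hy, h])
    have had : a ≠ d := fun h => hdisj a (by simp [hx]) (by simp [hy, h])
    have hbc : b ≠ c := fun h => hdisj b (by simp [hx]) (by simp [hy, h])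
    have hbd : b ≠ d := fun h => hdisj b (by simp [hx]) (by simp [hy, h])
    have hne : ∀ (u w : Fin n), u ≠ w → s(u,w) ∈ (⊤ : SimpleGraph (Fin n)).edgeSet := by
      intro u w h; simp [h]
    have hnotmem : ∀ (g : (⊤ : SimpleGraph (Fin n)).edgeSet),
        (g : Sym2 (Fin n)) ∉ Subtype.val '' X → g ∉ X := fun g h hg => h ⟨g, hg, rfl⟩
    have hthis := hno a b c d hab hcd hac had hbc hbd
    rw [not_and_or, not_and_or, not_and_or] at hthis
    rcases hthis with h | h | h | h
    · refine vis_aux hxy hadj (g := ⟨s(a,c), hne a c hac⟩) ?_ ?_ (hnotmem _ h)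
      · exact lineAdj hx rfl hbc
      · exact lineAdj Sym2.eq_swap hy had
    · refine vis_aux hxy hadj (g := ⟨s(a,d), hne a d had⟩) ?_ ?_ (hnotmem _ h)
      · exact lineAdj hx rfl hbd
      · exact lineAdj Sym2.eq_swap (hy.trans Sym2.eq_swap) hac
    · refine vis_aux hxy hadj (g := ⟨s(b,c), hne b c hbc⟩) ?_ ?_ (hnotmem _ h)
      · exact lineAdj (hx.trans Sym2.eq_swap) rfl hac
      · exact lineAdj Sym2.eq_swap hy hbd
    · refine vis_aux hxy hadj (g := ⟨s(b,d), hne b d hbd⟩) ?_ ?_ (hnotmem _ h)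
      · exact lineAdj (hx.trans Sym2.eq_swap) rfl had
      · exact lineAdj Sym2.eq_swap (hy.trans Sym2.eq_swap) hbc

lemma copy_iff {n : ℕ} (H : SimpleGraph (Fin n)) :
    ¬ ContainsCopy (cycleGraph 4) H ↔ NoC4 H.edgeSet := by
  rw [← not_iff_not, not_not]
  constructor
  · rintro ⟨f, hinj, hadj⟩ hno
    have e01 : H.Adj (f 0) (f 1) := hadj 0 1 (by decide)
    have e12 : H.Adj (f 1) (f 2) := hadj 1 2 (by decide)
    have e23 : H.Adj (f 2) (f 3) := hadj 2 3 (by decide)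
    have e30 : H.Adj (f 3) (f 0) := hadj 3 0 (by decide)
    exact hno (f 0) (f 2) (f 1) (f 3) (hinj.ne (by decide)) (hinj.ne (by decide))
      (hinj.ne (by decide)) (hinj.ne (by decide)) (hinj.ne (by decide)) (hinj.ne (by decide))
      ⟨H.mem_edgeSet.mpr e01, H.mem_edgeSet.mpr e30.symm,
       H.mem_edgeSet.mpr e12.symm, H.mem_edgeSet.mpr e23⟩
  · intro hno
    unfold NoC4 at hno
    push_neg at hno
    obtain ⟨a, b, c, d, hab, hcd, hac, had, hbc, hbd, m1, m2, m3, m4⟩ := hno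
    have hAC : H.Adj a c := H.mem_edgeSet.mp m1
    have hAD : H.Adj a d := H.mem_edgeSet.mp m2
    have hBC : H.Adj b c := H.mem_edgeSet.mp m3
    have hBD : H.Adj b d := H.mem_edgeSet.mp m4
    refine ⟨![a, c, b, d], ?_, ?_⟩
    · intro i j hij
      fin_cases i <;> fin_cases j <;> simp_all
    · intro i j hadj
      fin_cases i <;> fin_cases j <;>
        first
          | exact absurd hadj (by decide)
          | simpa using hAC
          | simpa using hAC.symm
          | simpa using hAD
          | simpa using hAD.symm
          | simpa using hBC
          | simpa using hBC.symm
          | simpa using hBD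
          | simpa using hBD.symm

end AuxC4

theorem muTotal_lineGraph_complete_eq_ex_C4 (n : ℕ) (hn : 3 ≤ n) :
    muTotal (⊤ : SimpleGraph (Fin n)).lineGraph = exNum n (cycleGraph 4) := by
  unfold muTotal exNum
  congr 1
  ext k
  simp only [Set.mem_setOf_eq]
  constructor
  · rintro ⟨X, hX, rfl⟩
    refine ⟨SimpleGraph.fromEdgeSet (Subtype.val '' X), ?_, ?_⟩
    · have hE : (SimpleGraph.fromEdgeSet (Subtype.val '' X)).edgeSet = Subtype.val '' X := by
        rw [SimpleGraph.edgeSet_fromEdgeSet]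
        ext e
        simp only [Set.mem_diff, Set.mem_setOf_eq, and_iff_left_iff_imp]
        rintro ⟨x, hx, rfl⟩
        exact (⊤ : SimpleGraph (Fin n)).not_isDiag_of_mem_edgeSet x.prop
      rw [copy_iff, hE]
      exact (tmv_iff X).mp hX
    · have hE : (SimpleGraph.fromEdgeSet (Subtype.val '' X)).edgeSet = Subtype.val '' X := by
        rw [SimpleGraph.edgeSet_fromEdgeSet]
        ext e
        simp only [Set.mem_diff, Set.mem_setOf_eq, and_iff_left_iff_imp]
        rintro ⟨x, hx, rfl⟩
        exact (⊤ : SimpleGraph (Fin n)).not_isDiag_of_mem_edgeSet x.prop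
      rw [hE]
      exact Set.ncard_image_of_injective X Subtype.val_injective
  · rintro ⟨H, hH, rfl⟩
    refine ⟨Subtype.val ⁻¹' H.edgeSet, ?_, ?_⟩
    · have himg : Subtype.val '' (Subtype.val ⁻¹' H.edgeSet :
          Set ((⊤ : SimpleGraph (Fin n)).edgeSet)) = H.edgeSet := by
        rw [Subtype.image_preimage_coe]
        exact Set.inter_eq_self_of_subset_right (SimpleGraph.edgeSet_mono le_top)
      apply (tmv_iff _).mpr
      rw [himg]
      exact (copy_iff H).mp hH
    · have himg : Subtype.val '' (Subtype.val ⁻¹' H.edgeSet :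
          Set ((⊤ : SimpleGraph (Fin n)).edgeSet)) = H.edgeSet := by
        rw [Subtype.image_preimage_coe]
        exact Set.inter_eq_self_of_subset_right (SimpleGraph.edgeSet_mono le_top)
      rw [← Set.ncard_image_of_injective (Subtype.val ⁻¹' H.edgeSet) Subtype.val_injective, himg]
end MutualVisibility
end
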